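/- Under the hypotheses of Assumption A in an open set U ⊆ (ℝ∖{0}) × ℝ^{d−1}, the function F(z,u) = P(Σ_{i=1}^d u_i X_i ≤ z) is partially differentiable in z on ℝ × U with ∂F/∂z (z,u) = |u₁|⁻¹ · E[φ(u₁⁻¹(z − Σ_{j=2}^d u_j X_j), X₂, …, X_d)], and this partial derivative is jointly continuous in (z,u). -/

import Mathlib

open MeasureTheory

/-- `φ` is a conditional density of `X₁` given the vector `Y = (X₂,…,X_d)`. -/
def IsCondDensity {Ω : Type*} [MeasurableSpace Ω] (μ : Measure Ω)
    {m : ℕ} (X1 : Ω → ℝ) (Y : Ω → (Fin m → ℝ)) (φ : ℝ → (Fin m → ℝ) → ℝ) : Prop :=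
  Measurable (Function.uncurry φ) ∧ (∀ t x, 0 ≤ φ t x) ∧
    ∀ A : Set ℝ, MeasurableSet A → ∀ B : Set (Fin m → ℝ), MeasurableSet B →
      (μ {ω | X1 ω ∈ A ∧ Y ω ∈ B}).toReal
        = ∫ ω in {ω | Y ω ∈ B}, ∫ t in A, φ t (Y ω) ∂(volume) ∂μ

/-- The weighted sum `Z(u) = u₁ X₁ + Σ_{j≥2} u_j X_j` for the weight vector `p = (u₁, (u_j))`. -/
noncomputable def Zw {Ω : Type*} {m : ℕ} (X1 : Ω → ℝ) (Y : Ω → (Fin m → ℝ))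
    (p : ℝ × (Fin m → ℝ)) (ω : Ω) : ℝ :=
  p.1 * X1 ω + ∑ i, p.2 i * Y ω i

/-- The distribution function `F(z, u) = P(Z(u) ≤ z)`. -/
noncomputable def Fcdf {Ω : Type*} [MeasurableSpace Ω] (μ : Measure Ω)
    {m : ℕ} (X1 : Ω → ℝ) (Y : Ω → (Fin m → ℝ)) (z : ℝ) (p : ℝ × (Fin m → ℝ)) : ℝ :=
  (μ {ω | Zw X1 Y p ω ≤ z}).toReal

/-- `E[φ(u₁⁻¹(t - Σ_{j≥2} u_j X_j), X₂,…,X_d)]`. -/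
noncomputable def densNum {Ω : Type*} [MeasurableSpace Ω] (μ : Measure Ω)
    {m : ℕ} (Y : Ω → (Fin m → ℝ)) (φ : ℝ → (Fin m → ℝ) → ℝ)
    (t : ℝ) (p : ℝ × (Fin m → ℝ)) : ℝ :=
  ∫ ω, φ (p.1⁻¹ * (t - ∑ i, p.2 i * Y ω i)) (Y ω) ∂μ

/-- `E[X_i φ(u₁⁻¹(t - Σ_{j≥2} u_j X_j), X₂,…,X_d)]` for `i ≥ 2`. -/
noncomputable def densNumX {Ω : Type*} [MeasurableSpace Ω] (μ : Measure Ω)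
    {m : ℕ} (Y : Ω → (Fin m → ℝ)) (φ : ℝ → (Fin m → ℝ) → ℝ) (i : Fin m)
    (t : ℝ) (p : ℝ × (Fin m → ℝ)) : ℝ :=
  ∫ ω, Y ω i * φ (p.1⁻¹ * (t - ∑ j, p.2 j * Y ω j)) (Y ω) ∂μ

/-- Assumption A from the paper, on the open set `U ⊆ (ℝ∖{0}) × ℝ^{d-1}`:
(i) `t ↦ φ(t,x)` is continuous; (ii) `(t,u) ↦ E[φ(u₁⁻¹(t - Σ u_j X_j), X₂,…,X_d)]`
is finite-valued and jointly continuous on `ℝ × U`; (iii) likewise for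
`(t,u) ↦ E[X_i φ(u₁⁻¹(t - Σ u_j X_j), X₂,…,X_d)]`, `i = 2,…,d`. -/
def AssumptionA {Ω : Type*} [MeasurableSpace Ω] (μ : Measure Ω)
    {m : ℕ} (X1 : Ω → ℝ) (Y : Ω → (Fin m → ℝ)) (φ : ℝ → (Fin m → ℝ) → ℝ)
    (U : Set (ℝ × (Fin m → ℝ))) : Prop :=
  IsOpen U ∧ (∀ p ∈ U, p.1 ≠ 0) ∧
  (∀ x, Continuous fun t => φ t x) ∧
  (∀ (t : ℝ), ∀ p ∈ U, Integrable (fun ω => φ (p.1⁻¹ * (t - ∑ i, p.2 i * Y ω i)) (Y ω)) μ) ∧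
  ContinuousOn (fun q : ℝ × (ℝ × (Fin m → ℝ)) => densNum μ Y φ q.1 q.2) (Set.univ ×ˢ U) ∧
  (∀ i : Fin m, ∀ (t : ℝ), ∀ p ∈ U,
    Integrable (fun ω => Y ω i * φ (p.1⁻¹ * (t - ∑ j, p.2 j * Y ω j)) (Y ω)) μ) ∧
  (∀ i : Fin m,
    ContinuousOn (fun q : ℝ × (ℝ × (Fin m → ℝ)) => densNumX μ Y φ i q.1 q.2) (Set.univ ×ˢ U))

lemma lintegral_affine_halfline {c : ℝ} (hc : c ≠ 0) (d z : ℝ) {f : ℝ → ENNReal}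
    (hf : Measurable f) :
    ∫⁻ x in {x : ℝ | c * x + d ≤ z}, f x
      = ENNReal.ofReal |c|⁻¹ * ∫⁻ t in Set.Iic z, f (c⁻¹ * (t - d)) := by
  set S : Set ℝ := {x : ℝ | c * x + d ≤ z} with hS
  have hSm : MeasurableSet S := measurableSet_le (by fun_prop) measurable_const
  set T : ℝ → ℝ := fun t => c⁻¹ * (t - d) with hT
  have hTm : Measurable T := by fun_prop
  have hmapT : Measure.map T volume = ENNReal.ofReal |c| • volume := by
    have h1 : T = (fun x => c⁻¹ * x) ∘ (fun t => t - d) := rfl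
    rw [h1, ← Measure.map_map (measurable_const_mul _)
      (by fun_prop : Measurable fun t : ℝ => t - d),
      (measurePreserving_sub_right volume d).map_eq,
      Real.map_volume_mul_left (inv_ne_zero hc), inv_inv]
  have hind : ∀ t, (Set.Iic z).indicator (fun t => f (T t)) t = S.indicator f (T t) := by
    intro t
    have hct : c * (c⁻¹ * (t - d)) + d = t := by field_simp; ring
    have hmem : T t ∈ S ↔ t ≤ z := by
      simp only [hS, Set.mem_setOf_eq, hT, hct]
    by_cases ht : t ≤ z
    · rw [Set.indicator_of_mem (Set.mem_Iic.2 ht), Set.indicator_of_mem (hmem.2 ht)]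
    · rw [Set.indicator_of_notMem (by simpa using ht),
        Set.indicator_of_notMem (fun h => ht (hmem.1 h))]
  have key : ∫⁻ t in Set.Iic z, f (T t) = ENNReal.ofReal |c| * ∫⁻ x in S, f x := by
    rw [← lintegral_indicator measurableSet_Iic]
    calc ∫⁻ t, (Set.Iic z).indicator (fun t => f (T t)) t
        = ∫⁻ t, S.indicator f (T t) := lintegral_congr fun t => hind t
      _ = ∫⁻ x, S.indicator f x ∂(Measure.map T volume) :=
          (lintegral_map (hf.indicator hSm) hTm).symm
      _ = ENNReal.ofReal |c| * ∫⁻ x, S.indicator f x := by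
          rw [hmapT, lintegral_smul_measure, smul_eq_mul]
      _ = ENNReal.ofReal |c| * ∫⁻ x in S, f x := by rw [lintegral_indicator hSm]
  rw [key, ← mul_assoc, ← ENNReal.ofReal_mul (by positivity),
    inv_mul_cancel₀ (abs_ne_zero.2 hc), ENNReal.ofReal_one, one_mul]

/-- Under Assumption A, `F(z,u) = P(Σ u_i X_i ≤ z)` is partially differentiable in `z` with
jointly continuous derivative `∂F/∂z = |u₁|⁻¹ E[φ(u₁⁻¹(z - Σ_{j≥2} u_j X_j), X₂,…,X_d)]`. -/
theorem stmt9 {Ω : Type*} [MeasurableSpace Ω] (μ : Measure Ω) [IsProbabilityMeasure μ]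
    (m : ℕ) (hm : 1 ≤ m)
    (X1 : Ω → ℝ) (Y : Ω → (Fin m → ℝ)) (hX1 : Measurable X1) (hY : Measurable Y)
    (φ : ℝ → (Fin m → ℝ) → ℝ) (hφ : IsCondDensity μ X1 Y φ)
    (U : Set (ℝ × (Fin m → ℝ))) (hA : AssumptionA μ X1 Y φ U) :
    (∀ (z : ℝ), ∀ p ∈ U,
      HasDerivAt (fun z' => Fcdf μ X1 Y z' p) (|p.1|⁻¹ * densNum μ Y φ z p) z) ∧
    ContinuousOn (fun q : ℝ × (ℝ × (Fin m → ℝ)) => |q.2.1|⁻¹ * densNum μ Y φ q.1 q.2)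
      (Set.univ ×ˢ U) := by
  obtain ⟨hφmeas, hφnn, hφcd⟩ := hφ
  obtain ⟨hUopen, hUne, hφcont, hInt, hCont, hIntX, hContX⟩ := hA
  have hφm2 : Measurable fun q : ℝ × (Fin m → ℝ) => φ q.1 q.2 := hφmeas
  have hφe : Measurable fun q : ℝ × (Fin m → ℝ) => ENNReal.ofReal (φ q.1 q.2) :=
    ENNReal.measurable_ofReal.comp hφm2
  set η : Measure (Fin m → ℝ) := μ.map Y with hηdef
  haveI : IsProbabilityMeasure η := Measure.isProbabilityMeasure_map hY.aemeasurable
  have hXY : Measurable fun ω => (X1 ω, Y ω) := hX1.prodMk hY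
  set ν : Measure (ℝ × (Fin m → ℝ)) := μ.map (fun ω => (X1 ω, Y ω)) with hνdef
  haveI : IsProbabilityMeasure ν := Measure.isProbabilityMeasure_map hXY.aemeasurable
  set ρ : Measure (ℝ × (Fin m → ℝ)) :=
    ((volume : Measure ℝ).prod η).withDensity (fun q => ENNReal.ofReal (φ q.1 q.2)) with hρdef
  -- the "bad" set where the fiberwise lintegral is infinite
  have hLm : Measurable fun y : Fin m → ℝ => ∫⁻ t, ENNReal.ofReal (φ t y) ∂volume :=
    Measurable.lintegral_prod_left hφe
  set N : Set (Fin m → ℝ) := {y | ∫⁻ t, ENNReal.ofReal (φ t y) ∂volume = ⊤} with hNdef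
  have hNm : MeasurableSet N := hLm (measurableSet_singleton ⊤)
  have hφym : ∀ y, Measurable fun t => φ t y := fun y => hφm2.comp measurable_prodMk_right
  -- unconditional Bochner = lintegral identity for sections
  have hsec : ∀ (A : Set ℝ) (y : Fin m → ℝ),
      ∫ t in A, φ t y = (∫⁻ t in A, ENNReal.ofReal (φ t y) ∂volume).toReal := fun A y =>
    integral_eq_lintegral_of_nonneg_ae (Filter.Eventually.of_forall fun t => hφnn t y)
      ((hφym y).aestronglyMeasurable)
  -- N is null
  have hNnull : η N = 0 := by
    have h0 := hφcd Set.univ MeasurableSet.univ N hNm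
    have hset : {ω | X1 ω ∈ Set.univ ∧ Y ω ∈ N} = Y ⁻¹' N := by ext ω; simp
    have hzero : ∫ ω in {ω | Y ω ∈ N}, ∫ t in Set.univ, φ t (Y ω) ∂volume ∂μ = 0 := by
      have hz : ∀ ω ∈ Y ⁻¹' N, (∫ t in Set.univ, φ t (Y ω) ∂volume) = (0:ℝ) := by
        intro ω hω
        rw [hsec Set.univ (Y ω), Measure.restrict_univ, hω, ENNReal.toReal_top]
      have h' := setIntegral_congr_fun (μ := μ) (hY hNm) hz
      rw [integral_zero] at h'
      exact h'
    rw [hset, hzero] at h0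
    rw [hηdef, Measure.map_apply hY hNm]
    exact (ENNReal.toReal_eq_zero_iff _).1 h0 |>.resolve_right (measure_ne_top μ _)
  -- a.e. identity used for rectangles
  have hae : ∀ (A : Set ℝ), MeasurableSet A →
      (fun y => ∫⁻ t in A, ENNReal.ofReal (φ t y) ∂volume)
        =ᵐ[η] fun y => ENNReal.ofReal (∫ t in A, φ t y) := by
    intro A hAm
    filter_upwards [measure_eq_zero_iff_ae_notMem.1 hNnull] with y hy
    have hfin : ∫⁻ t in A, ENNReal.ofReal (φ t y) ∂volume ≠ ⊤ := by
      refine ne_top_of_le_ne_top ?_ (setLIntegral_le_lintegral A _)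
      simpa [hNdef] using hy
    rw [hsec A y, ENNReal.ofReal_toReal hfin]
  -- rectangle formula for ρ
  have hρrect : ∀ (A : Set ℝ), MeasurableSet A → ∀ (B : Set (Fin m → ℝ)), MeasurableSet B →
      ρ (A ×ˢ B) = ∫⁻ y in B, ENNReal.ofReal (∫ t in A, φ t y) ∂η := by
    intro A hAm B hBm
    rw [hρdef, withDensity_apply _ (hAm.prod hBm), ← Measure.prod_restrict,
      lintegral_prod_symm _ hφe.aemeasurable]
    exact lintegral_congr_ae (ae_restrict_of_ae (hae A hAm))
  -- strong measurability of parametric integral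
  have hgsm : ∀ (A : Set ℝ), StronglyMeasurable fun y => ∫ t in A, φ t y := by
    intro A
    exact StronglyMeasurable.integral_prod_right'
      (f := fun q : (Fin m → ℝ) × ℝ => φ q.2 q.1)
      ((hφm2.comp measurable_swap).stronglyMeasurable)
  -- toReal of ρ rectangle equals Bochner integral
  have hρtoReal : ∀ (A : Set ℝ), MeasurableSet A → ∀ (B : Set (Fin m → ℝ)), MeasurableSet B →
      (ρ (A ×ˢ B)).toReal = ∫ y in B, (∫ t in A, φ t y) ∂η := by
    intro A hAm B hBm
    rw [hρrect A hAm B hBm]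
    exact (integral_eq_lintegral_of_nonneg_ae
        (Filter.Eventually.of_forall fun y => integral_nonneg fun t => hφnn t y)
        ((hgsm A).aestronglyMeasurable)).symm
  -- toReal of ν rectangle equals the same Bochner integral
  have hνtoReal : ∀ (A : Set ℝ), MeasurableSet A → ∀ (B : Set (Fin m → ℝ)), MeasurableSet B →
      (ν (A ×ˢ B)).toReal = ∫ y in B, (∫ t in A, φ t y) ∂η := by
    intro A hAm B hBm
    have h1 : ν (A ×ˢ B) = μ {ω | X1 ω ∈ A ∧ Y ω ∈ B} := by
      rw [hνdef, Measure.map_apply hXY (hAm.prod hBm)]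
      congr 1
    have h2 : {ω | Y ω ∈ B} = Y ⁻¹' B := rfl
    rw [h1, hφcd A hAm B hBm, h2, hηdef,
      ← setIntegral_map hBm ((hgsm A).aestronglyMeasurable) hY.aemeasurable]
  -- ρ is a probability measure
  have hρuniv : ρ Set.univ = 1 := by
    have h1 : (ρ (Set.univ ×ˢ Set.univ)).toReal = 1 := by
      rw [hρtoReal Set.univ MeasurableSet.univ Set.univ MeasurableSet.univ,
        ← hνtoReal Set.univ MeasurableSet.univ Set.univ MeasurableSet.univ,
        Set.univ_prod_univ, measure_univ, ENNReal.toReal_one]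
    have h2 : ρ (Set.univ ×ˢ Set.univ) ≠ ⊤ := by
      intro h
      rw [h, ENNReal.toReal_top] at h1
      norm_num at h1
    rw [← Set.univ_prod_univ, ← ENNReal.ofReal_toReal h2, h1, ENNReal.ofReal_one]
  haveI hρprob : IsProbabilityMeasure ρ := ⟨hρuniv⟩
  -- ν = ρ
  have hνρ : ν = ρ := by
    refine ext_of_generate_finite _ generateFrom_prod.symm isPiSystem_prod ?_ ?_
    · rintro s ⟨A, hAm, B, hBm, rfl⟩
      have := (hνtoReal A hAm B hBm).trans (hρtoReal A hAm B hBm).symm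
      exact (ENNReal.toReal_eq_toReal_iff' (measure_ne_top ν _) (measure_ne_top ρ _)).1 this
    · rw [measure_univ, measure_univ]
  -- main computation of the CDF
  have hmain : ∀ p ∈ U, ∀ z : ℝ,
      ((Fcdf μ X1 Y z p : ℝ)
        = (∫⁻ t in Set.Iic z, ENNReal.ofReal (|p.1|⁻¹ * densNum μ Y φ t p) ∂volume).toReal)
      ∧ (∫⁻ t in Set.Iic z, ENNReal.ofReal (|p.1|⁻¹ * densNum μ Y φ t p) ∂volume) ≠ ⊤ := by
    intro p hp z
    have hc : p.1 ≠ 0 := hUne p hp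
    set S : Set (ℝ × (Fin m → ℝ)) := {q | p.1 * q.1 + ∑ i, p.2 i * q.2 i ≤ z} with hSdef
    have hsy : Measurable fun y : Fin m → ℝ => ∑ i, p.2 i * y i := by fun_prop
    have hSm : MeasurableSet S :=
      measurableSet_le (by fun_prop) measurable_const
    have h1 : Fcdf μ X1 Y z p = (ν S).toReal := by
      rw [Fcdf, hνdef, Measure.map_apply hXY hSm]
      rfl
    -- inner measurable integrand after change of variables
    have hGm : Measurable fun q : ℝ × (Fin m → ℝ) =>
        ENNReal.ofReal (φ (p.1⁻¹ * (q.1 - ∑ i, p.2 i * q.2 i)) q.2) := by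
      apply ENNReal.measurable_ofReal.comp
      exact hφm2.comp ((by fun_prop : Measurable fun q : ℝ × (Fin m → ℝ) =>
        p.1⁻¹ * (q.1 - ∑ i, p.2 i * q.2 i)).prodMk measurable_snd)
    have hρS : ρ S = ENNReal.ofReal |p.1|⁻¹ *
        ∫⁻ t in Set.Iic z, (∫⁻ y, ENNReal.ofReal
          (φ (p.1⁻¹ * (t - ∑ i, p.2 i * y i)) y) ∂η) ∂volume := by
      rw [hρdef, withDensity_apply _ hSm, ← lintegral_indicator hSm,
        lintegral_prod_symm _ (hφe.indicator hSm).aemeasurable]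
      have hfib : ∀ y : Fin m → ℝ,
          (∫⁻ x, S.indicator (fun q => ENNReal.ofReal (φ q.1 q.2)) (x, y) ∂volume)
            = ENNReal.ofReal |p.1|⁻¹ * ∫⁻ t in Set.Iic z,
                ENNReal.ofReal (φ (p.1⁻¹ * (t - ∑ i, p.2 i * y i)) y) ∂volume := by
        intro y
        have hind : ∀ x, S.indicator (fun q => ENNReal.ofReal (φ q.1 q.2)) (x, y)
            = {x : ℝ | p.1 * x + (∑ i, p.2 i * y i) ≤ z}.indicator
                (fun x => ENNReal.ofReal (φ x y)) x := by
          intro x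
          simp only [Set.indicator_apply, hSdef, Set.mem_setOf_eq]
        rw [lintegral_congr hind,
          lintegral_indicator (measurableSet_le (by fun_prop) measurable_const),
          lintegral_affine_halfline (f := fun x => ENNReal.ofReal (φ x y)) hc _ z
            ((hφym y).ennreal_ofReal)]
      calc ∫⁻ y, (∫⁻ x, S.indicator (fun q => ENNReal.ofReal (φ q.1 q.2)) (x, y) ∂volume) ∂η
          = ∫⁻ y, ENNReal.ofReal |p.1|⁻¹ * ∫⁻ t in Set.Iic z,
              ENNReal.ofReal (φ (p.1⁻¹ * (t - ∑ i, p.2 i * y i)) y) ∂volume ∂η :=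
            lintegral_congr hfib
        _ = ENNReal.ofReal |p.1|⁻¹ * ∫⁻ y, ∫⁻ t in Set.Iic z,
              ENNReal.ofReal (φ (p.1⁻¹ * (t - ∑ i, p.2 i * y i)) y) ∂volume ∂η :=
            lintegral_const_mul' _ _ ENNReal.ofReal_ne_top
        _ = ENNReal.ofReal |p.1|⁻¹ *
            ∫⁻ t in Set.Iic z, (∫⁻ y, ENNReal.ofReal
              (φ (p.1⁻¹ * (t - ∑ i, p.2 i * y i)) y) ∂η) ∂volume := by
            congr 1
            exact lintegral_lintegral_swap
              ((hGm.comp measurable_swap).aemeasurable)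
    -- identify the inner integral with densNum
    have hinner : ∀ t : ℝ,
        (∫⁻ y, ENNReal.ofReal (φ (p.1⁻¹ * (t - ∑ i, p.2 i * y i)) y) ∂η)
          = ENNReal.ofReal (densNum μ Y φ t p) := by
      intro t
      have hFm : Measurable (fun y : Fin m → ℝ =>
          ENNReal.ofReal (φ (p.1⁻¹ * (t - ∑ i, p.2 i * y i)) y)) :=
        hGm.comp (measurable_prodMk_left : Measurable fun y : Fin m → ℝ => (t, y))
      rw [hηdef, lintegral_map hFm hY]
      exact (ofReal_integral_eq_lintegral_ofReal (hInt t p hp)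
        (Filter.Eventually.of_forall fun ω => hφnn _ _)).symm
    have hρS' : ρ S = ∫⁻ t in Set.Iic z,
        ENNReal.ofReal (|p.1|⁻¹ * densNum μ Y φ t p) ∂volume := by
      rw [hρS]
      rw [← lintegral_const_mul' _ _ ENNReal.ofReal_ne_top]
      refine setLIntegral_congr_fun measurableSet_Iic
        (fun t _ => ?_)
      rw [hinner t, ← ENNReal.ofReal_mul (by positivity)]
    constructor
    · rw [h1, hνρ, hρS']
    · rw [← hρS']
      exact measure_ne_top ρ S
  constructor
  · intro z p hp
    set k : ℝ → ℝ := fun t => |p.1|⁻¹ * densNum μ Y φ t p with hkdef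
    have hdcont : Continuous fun t => densNum μ Y φ t p := by
      rw [← continuousOn_univ]
      have hmaps : Set.MapsTo (fun t : ℝ => (t, p)) Set.univ (Set.univ ×ˢ U) :=
        fun t _ => ⟨Set.mem_univ _, hp⟩
      exact hCont.comp ((continuous_id.prodMk continuous_const).continuousOn) hmaps
    have hkcont : Continuous k := continuous_const.mul hdcont
    have hknn : ∀ t, 0 ≤ k t := fun t =>
      mul_nonneg (inv_nonneg.2 (abs_nonneg _)) (integral_nonneg fun ω => hφnn _ _)
    have key : ∀ a b : ℝ, a ≤ b →
        Fcdf μ X1 Y b p - Fcdf μ X1 Y a p = ∫ t in a..b, k t := by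
      intro a b hab
      have hsplit : (∫⁻ t in Set.Iic b, ENNReal.ofReal (k t) ∂volume)
          = (∫⁻ t in Set.Iic a, ENNReal.ofReal (k t) ∂volume)
            + ∫⁻ t in Set.Ioc a b, ENNReal.ofReal (k t) ∂volume := by
        rw [← lintegral_union measurableSet_Ioc (Set.Iic_disjoint_Ioc le_rfl),
          Set.Iic_union_Ioc_eq_Iic hab]
      have hIoc_fin : (∫⁻ t in Set.Ioc a b, ENNReal.ofReal (k t) ∂volume) ≠ ⊤ := by
        intro h
        exact (hmain p hp b).2 (by rw [hsplit, h]; simp)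
      rw [(hmain p hp b).1, (hmain p hp a).1, hsplit,
        ENNReal.toReal_add (hmain p hp a).2 hIoc_fin,
        intervalIntegral.integral_of_le hab,
        integral_eq_lintegral_of_nonneg_ae (Filter.Eventually.of_forall fun t => hknn t)
          hkcont.aestronglyMeasurable]
      ring
    have key' : ∀ z' : ℝ, Fcdf μ X1 Y z' p = Fcdf μ X1 Y 0 p + ∫ t in (0:ℝ)..z', k t := by
      intro z'
      rcases le_total 0 z' with h | h
      · have := key 0 z' h; linarith
      · have h1 := key z' 0 h
        have h2 := intervalIntegral.integral_symm (f := k) (μ := volume) z' 0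
        linarith
    have hH : HasDerivAt (fun z' => ∫ t in (0:ℝ)..z', k t) (k z) z :=
      intervalIntegral.integral_hasDerivAt_right (hkcont.intervalIntegrable _ _)
        (hkcont.stronglyMeasurableAtFilter _ _) hkcont.continuousAt
    have heq : (fun z' => Fcdf μ X1 Y z' p)
        = fun z' => Fcdf μ X1 Y 0 p + ∫ t in (0:ℝ)..z', k t := funext key'
    rw [heq]
    exact hH.const_add _
  · have h1 : ContinuousOn (fun q : ℝ × (ℝ × (Fin m → ℝ)) => |q.2.1|⁻¹) (Set.univ ×ˢ U) := by
      apply ContinuousOn.inv₀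
      · exact (continuous_abs.comp (continuous_fst.comp continuous_snd)).continuousOn
      · intro q hq
        exact abs_ne_zero.2 (hUne q.2 hq.2)
    exact h1.mul hCont
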